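/- Fix 0 < Δt_min ≤ 1 and δ = 1/3. For Δt ∈ [Δt_min, 1] and ξ ∈ (1-δ, 1), the contraction factor satisfies e^{Δt(1-ξ)}·(1 - Δt·ξ) ≤ 1 - δ·Δt_min. -/
import Mathlib

/-- Convergence-phase contraction estimate: for `δ = 1/3`, `Δt ∈ [Δt_min, 1]` with
`0 < Δt_min ≤ 1`, and `ξ ∈ (1 - δ, 1)`, one has
`e^{Δt(1-ξ)}·(1 - Δt·ξ) ≤ 1 - δ·Δt_min`. -/
theorem stmt_13 (Δtmin Δt ξ : ℝ) (h0 : 0 < Δtmin) (h1 : Δtmin ≤ 1)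
    (hΔl : Δtmin ≤ Δt) (hΔu : Δt ≤ 1)
    (hξl : 1 - 1 / 3 < ξ) (hξu : ξ < 1) :
    Real.exp (Δt * (1 - ξ)) * (1 - Δt * ξ) ≤ 1 - (1 / 3) * Δtmin := by
  set a := Δt * (1 - ξ) with ha
  have hΔ0 : 0 < Δt := lt_of_lt_of_le h0 hΔl
  have ha0 : 0 < a := by
    have : 0 < 1 - ξ := by linarith
    positivity
  have ha1 : a < 1 / 3 := by nlinarith
  have hexp : Real.exp a * (1 - a) ≤ 1 := by
    have h2 : 1 - a ≤ Real.exp (-a) := by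
      have := Real.add_one_le_exp (-a); linarith
    calc Real.exp a * (1 - a) ≤ Real.exp a * Real.exp (-a) := by
          exact mul_le_mul_of_nonneg_left h2 (Real.exp_pos a).le
      _ = 1 := by rw [← Real.exp_add]; simp
  have hep : 0 < Real.exp a := Real.exp_pos a
  have hn : 0 < 1 - Δt * ξ := by nlinarith
  nlinarith [mul_pos hep hn, mul_le_mul_of_nonneg_right hexp hn.le,
    mul_pos hep (mul_pos hΔ0 (show (0:ℝ) < 2*ξ - 1 by linarith))]
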